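/- Let E be a real inner product space and Δ : E →ₗ[ℝ] E a symmetric linear map satisfying the compactness property, the weak-regularity property, and the coercivity estimate with some constant k > 0. Then the range of Δ equals the orthogonal complement (ker Δ)ᗮ, and every α ∈ E decomposes uniquely as α = β + h with β in the range of Δ and h ∈ ker Δ. Consequently the equation Δ ω = α has a solution ω ∈ E if and only if α is orthogonal to ker Δ. (Hodge–de Rham decomposition theorem, abstract conditional form HdR 2.) -/

import Mathlib

open scoped RealInnerProductSpace

/-- Hodge–de Rham decomposition theorem, abstract conditional form (HdR 2):
if the symmetric operator `Δ` on a real inner product space satisfies the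
compactness property, the weak-regularity property and the coercivity
estimate, then `range Δ = (ker Δ)ᗮ`, every element decomposes uniquely as a
sum of an element of `range Δ` and an element of `ker Δ`, and `Δ ω = α` is
solvable iff `α ⟂ ker Δ`. -/
theorem hodge_de_rham_decomposition
    {E : Type*} [NormedAddCommGroup E] [InnerProductSpace ℝ E]
    (Δ : E →ₗ[ℝ] E)
    (hsym : ∀ x y : E, ⟪Δ x, y⟫ = ⟪x, Δ y⟫)
    (hcompact : ∀ (α : ℕ → E) (c : ℝ), 0 < c → (∀ n, ‖α n‖ ≤ c) →
      (∀ n, ‖Δ (α n)‖ ≤ c) → ∃ φ : ℕ → ℕ, StrictMono φ ∧ CauchySeq (α ∘ φ))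
    (hweak : ∀ (α : E) (L : E →L[ℝ] ℝ), (∀ θ : E, L (Δ θ) = ⟪α, θ⟫) →
      ∃ ω : E, ∀ β : E, L β = ⟪ω, β⟫)
    (k : ℝ) (hk : 0 < k)
    (hcoercive : ∀ γ ∈ (LinearMap.ker Δ)ᗮ, ‖γ‖ ≤ k * ‖Δ γ‖) :
    LinearMap.range Δ = (LinearMap.ker Δ)ᗮ ∧
    (∀ α : E, ∃! p : E × E,
      p.1 ∈ LinearMap.range Δ ∧ p.2 ∈ LinearMap.ker Δ ∧ α = p.1 + p.2) ∧
    (∀ α : E, (∃ ω : E, Δ ω = α) ↔ α ∈ (LinearMap.ker Δ)ᗮ) := by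
  classical
  set K : Submodule ℝ E := LinearMap.ker Δ with hKdef
  -- Step 1: the kernel is finite-dimensional, via the compactness property.
  have hfin : FiniteDimensional ℝ K := by
    by_contra hinf
    obtain ⟨R, f, hR1, hfR, hpair⟩ :=
      exists_seq_norm_le_one_le_norm_sub (𝕜 := ℝ) (E := K) hinf
    have hR0 : (0 : ℝ) < R := lt_trans one_pos hR1
    obtain ⟨φ, hφ, hcau⟩ := hcompact (fun n => (f n : E)) R hR0
      (fun n => hfR n)
      (fun n => by
        have : Δ (f n : E) = 0 := (f n).2
        simp [this, le_of_lt hR0])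
    rw [Metric.cauchySeq_iff'] at hcau
    obtain ⟨N, hN⟩ := hcau 1 one_pos
    have h1 := hN (N + 1) (Nat.le_succ N)
    have hne : φ (N + 1) ≠ φ N := (hφ (Nat.lt_succ_self N)).ne'
    have hge : (1 : ℝ) ≤ dist (((fun n => (f n : E)) ∘ φ) (N + 1))
        (((fun n => (f n : E)) ∘ φ) N) := by
      have := hpair hne
      simpa [dist_eq_norm] using this
    linarith
  haveI := hfin
  haveI : CompleteSpace K := FiniteDimensional.complete ℝ K
  -- Range is contained in the orthogonal complement of the kernel.
  have hsub : LinearMap.range Δ ≤ Kᗮ := by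
    rintro _ ⟨ω, rfl⟩
    rw [Submodule.mem_orthogonal]
    intro u hu
    have hu0 : Δ u = 0 := hu
    rw [real_inner_comm, hsym, hu0, inner_zero_right]
  -- Every element of `Kᗮ` is in the range.
  have hsurj : ∀ α ∈ Kᗮ, ∃ ω : E, Δ ω = α := by
    intro α hα
    have hα' : ∀ u ∈ K, ⟪α, u⟫ = 0 := fun u hu => by
      rw [real_inner_comm]; exact (Submodule.mem_orthogonal K α).mp hα u hu
    -- the functional θ ↦ ⟪α, θ⟫ kills the kernel, so factors through the range
    let g : E →ₗ[ℝ] ℝ := (innerSL ℝ α : E →L[ℝ] ℝ).toLinearMap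
    have hKg : K ≤ LinearMap.ker g := fun u hu => by
      simp only [LinearMap.mem_ker, ContinuousLinearMap.coe_coe, g, innerSL_apply_apply]
      exact hα' u hu
    let f0 : LinearMap.range Δ →ₗ[ℝ] ℝ :=
      (K.liftQ g hKg) ∘ₗ (Δ.quotKerEquivRange.symm : LinearMap.range Δ →ₗ[ℝ] E ⧸ K)
    have hf0 : ∀ (θ : E) (h : Δ θ ∈ LinearMap.range Δ), f0 ⟨Δ θ, h⟩ = ⟪α, θ⟫ := by
      intro θ h
      show (K.liftQ g hKg) (Δ.quotKerEquivRange.symm ⟨Δ θ, h⟩) = ⟪α, θ⟫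
      rw [Δ.quotKerEquivRange_symm_apply_image]
      simp [g]
    have hbound : ∀ x : LinearMap.range Δ, ‖f0 x‖ ≤ k * ‖α‖ * ‖x‖ := by
      rintro ⟨x, θ, rfl⟩
      obtain ⟨h, hh, γ, hγ, hθ⟩ := K.exists_add_mem_mem_orthogonal θ
      have hΔγ : Δ θ = Δ γ := by
        rw [hθ, map_add, (LinearMap.mem_ker.mp hh : Δ h = 0), zero_add]
      have hval : f0 ⟨Δ θ, ⟨θ, rfl⟩⟩ = ⟪α, γ⟫ := by
        exact (hf0 θ _).trans (by rw [hθ, inner_add_right, hα' h hh, zero_add])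
      rw [hval]
      calc ‖⟪α, γ⟫‖ ≤ ‖α‖ * ‖γ‖ := by
            simpa using abs_real_inner_le_norm α γ
        _ ≤ ‖α‖ * (k * ‖Δ γ‖) :=
            mul_le_mul_of_nonneg_left (hcoercive γ hγ) (norm_nonneg α)
        _ = k * ‖α‖ * ‖Δ γ‖ := by ring
        _ = k * ‖α‖ * ‖(⟨Δ θ, ⟨θ, rfl⟩⟩ : LinearMap.range Δ)‖ := by
            show k * ‖α‖ * ‖Δ γ‖ = k * ‖α‖ * ‖Δ θ‖
            rw [hΔγ]
    let f : LinearMap.range Δ →L[ℝ] ℝ := f0.mkContinuous (k * ‖α‖) hbound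
    obtain ⟨L, hL, -⟩ := exists_extension_norm_eq (LinearMap.range Δ) f
    have hLΔ : ∀ θ : E, L (Δ θ) = ⟪α, θ⟫ := fun θ => by
      have := hL ⟨Δ θ, ⟨θ, rfl⟩⟩
      exact (by simpa [f] using this : L (Δ θ) = f0 ⟨Δ θ, ⟨θ, rfl⟩⟩).trans (hf0 θ _)
    obtain ⟨ω, hω⟩ := hweak α L hLΔ
    refine ⟨ω, ?_⟩
    have hkey : ∀ θ : E, ⟪Δ ω - α, θ⟫ = 0 := fun θ => by
      have h1 : ⟪ω, Δ θ⟫ = ⟪α, θ⟫ := by rw [← hω (Δ θ), hLΔ θ]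
      rw [inner_sub_left, hsym ω θ, h1, sub_self]
    have := hkey (Δ ω - α)
    rw [inner_self_eq_zero] at this
    exact sub_eq_zero.mp this
  have hrange : LinearMap.range Δ = Kᗮ :=
    le_antisymm hsub (fun α hα => by obtain ⟨ω, hω⟩ := hsurj α hα; exact ⟨ω, hω⟩)
  refine ⟨hrange, ?_, fun α => ⟨fun ⟨ω, hω⟩ => hω ▸ hsub ⟨ω, rfl⟩,
    fun hα => hsurj α hα⟩⟩
  intro α
  obtain ⟨h, hh, β, hβ, hαsum⟩ := K.exists_add_mem_mem_orthogonal α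
  refine ⟨(β, h), ⟨hrange ▸ hβ, hh, by rw [hαsum]; exact add_comm h β⟩, ?_⟩
  rintro ⟨b, h'⟩ ⟨hb, hh', heq⟩
  have hbK : b ∈ Kᗮ := hrange ▸ hb
  have hdiff : b - β ∈ Kᗮ := Submodule.sub_mem _ hbK hβ
  have e1 : h + β = b + h' := by rw [← hαsum]; exact heq
  have hbh : b - β = h - h' := sub_eq_sub_iff_add_eq_add.mpr e1.symm
  have hdiffK : b - β ∈ K := by rw [hbh]; exact Submodule.sub_mem _ hh hh'
  have hz : b - β = 0 := by
    have := (Submodule.mem_orthogonal K (b - β)).mp hdiff (b - β) hdiffK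
    rwa [inner_self_eq_zero] at this
  have hb2 : b = β := sub_eq_zero.mp hz
  have h4 : h - h' = 0 := by rw [← hbh]; exact hz
  have hh2 : h' = h := (sub_eq_zero.mp h4).symm
  simp [Prod.ext_iff, hb2, hh2]
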